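/- Let G be a simple graph with adjacency matrix A, degree matrix D, and let v ∈ ℝⁿ be a nonnegative vector. Sample t with t² uniform in [0,1] and set xᵢ = 1 if vᵢ > t, else 0 (assuming 0 ≤ vᵢ ≤ 1 for all i). Then E[xᵀ(D-A)x] ≤ sqrt((vᵀDv)² - (vᵀAv)²). -/

import Mathlib

open Matrix MeasureTheory

lemma aux_ind_eq (a b s : ℝ) : (if a ≤ s ∧ s < b then (1:ℝ) else 0)
    = Set.indicator (Set.Ico a b) (fun _ => (1:ℝ)) s := by
  by_cases h : s ∈ Set.Ico a b
  · simp [Set.indicator_of_mem h, Set.mem_Ico.1 h]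
  · rw [Set.indicator_of_notMem h]
    simp only [Set.mem_Ico, not_and, not_lt] at h
    by_cases h1 : a ≤ s
    · simp [h1, not_lt.2 (h h1)]
    · simp [h1]

lemma aux_ind_intble (a b : ℝ) :
    Integrable (Set.indicator (Set.Ico a b) (fun _ => (1:ℝ))) volume := by
  rw [integrable_indicator_iff measurableSet_Ico]
  exact integrableOn_const (by simp [Real.volume_Ico])

lemma aux_ind_int (a b : ℝ) :
    ∫ s in (0:ℝ)..1, (if a ≤ s ∧ s < b then (1:ℝ) else 0) ≤ max (b - a) 0 := by
  simp only [aux_ind_eq]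
  have h1 : (∫ s in (0:ℝ)..1, Set.indicator (Set.Ico a b) (fun _ => (1:ℝ)) s)
      = ∫ s in Set.Ioc (0:ℝ) 1, Set.indicator (Set.Ico a b) (fun _ => (1:ℝ)) s :=
    intervalIntegral.integral_of_le zero_le_one
  rw [h1]
  have h2 : (∫ s in Set.Ioc (0:ℝ) 1, Set.indicator (Set.Ico a b) (fun _ => (1:ℝ)) s)
      ≤ ∫ s, Set.indicator (Set.Ico a b) (fun _ => (1:ℝ)) s := by
    apply setIntegral_le_integral (aux_ind_intble a b)
    filter_upwards with x
    exact Set.indicator_nonneg (fun _ _ => zero_le_one) x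
  refine h2.trans ?_
  rw [integral_indicator_const _ measurableSet_Ico, Real.volume_real_Ico]
  simp only [smul_eq_mul, mul_one]
  exact le_refl _

lemma aux_max_abs (x : ℝ) : max x 0 + max (-x) 0 = |x| := by
  rcases le_total 0 x with h | h
  · rw [max_eq_left h, max_eq_right (by linarith), abs_of_nonneg h]; ring
  · rw [max_eq_right h, max_eq_left (by linarith), abs_of_nonpos h]; ring

lemma aux_cs {n : ℕ} (A : Matrix (Fin n) (Fin n) ℝ) (hA : A.IsSymm)
    (hpos : ∀ i j, 0 ≤ A i j) (v : Fin n → ℝ) (hv : ∀ i, 0 ≤ v i) :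
    ∑ i, ∑ j, A i j * max (v i ^ 2 - v j ^ 2) 0 ≤
      Real.sqrt ((∑ i, ∑ j, A i j * v i ^ 2) ^ 2 - (∑ i, ∑ j, A i j * (v i * v j)) ^ 2) := by
  have hAs : ∀ i j, A j i = A i j := fun i j => congrFun (congrFun hA i) j
  have swap : ∀ F : Fin n → Fin n → ℝ,
      ∑ i, ∑ j, A i j * F i j = ∑ i, ∑ j, A i j * F j i := by
    intro F
    rw [Finset.sum_comm]
    exact Finset.sum_congr rfl fun i _ => Finset.sum_congr rfl fun j _ => by rw [hAs j i]
  set P := ∑ i, ∑ j, A i j * v i ^ 2 with hP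
  set Q := ∑ i, ∑ j, A i j * (v i * v j) with hQ
  set S := ∑ i, ∑ j, A i j * max (v i ^ 2 - v j ^ 2) 0 with hS
  have hP2 : ∑ i, ∑ j, A i j * v j ^ 2 = P := (swap (fun i j => v i ^ 2)).symm
  have h2S : 2 * S = ∑ i, ∑ j, A i j * |v i ^ 2 - v j ^ 2| := by
    have hswap := swap (fun i j => max (v i ^ 2 - v j ^ 2) 0)
    calc 2 * S = S + ∑ i, ∑ j, A i j * max (v j ^ 2 - v i ^ 2) 0 := by
          rw [hS, ← hswap]; ring
      _ = ∑ i, ∑ j, (A i j * max (v i ^ 2 - v j ^ 2) 0 + A i j * max (v j ^ 2 - v i ^ 2) 0) := by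
          rw [hS, ← Finset.sum_add_distrib]
          exact Finset.sum_congr rfl fun i _ => (Finset.sum_add_distrib).symm
      _ = ∑ i, ∑ j, A i j * |v i ^ 2 - v j ^ 2| := by
          refine Finset.sum_congr rfl fun i _ => Finset.sum_congr rfl fun j _ => ?_
          rw [← mul_add]
          congr 1
          rw [show v j ^ 2 - v i ^ 2 = -(v i ^ 2 - v j ^ 2) by ring, aux_max_abs]
  set f : Fin n × Fin n → ℝ := fun p => Real.sqrt (A p.1 p.2) * |v p.1 - v p.2| with hf
  set g : Fin n × Fin n → ℝ := fun p => Real.sqrt (A p.1 p.2) * (v p.1 + v p.2) with hg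
  have habs : ∀ i j : Fin n, |v i - v j| * (v i + v j) = |v i ^ 2 - v j ^ 2| := by
    intro i j
    rw [← abs_of_nonneg (add_nonneg (hv i) (hv j)), ← abs_mul]
    congr 1; ring
  have hfg : ∑ p : Fin n × Fin n, f p * g p = 2 * S := by
    rw [h2S, Fintype.sum_prod_type]
    refine Finset.sum_congr rfl fun i _ => Finset.sum_congr rfl fun j _ => ?_
    calc f (i, j) * g (i, j)
        = Real.sqrt (A i j) * Real.sqrt (A i j) * (|v i - v j| * (v i + v j)) := by
          rw [hf, hg]; ring
      _ = A i j * |v i ^ 2 - v j ^ 2| := by rw [Real.mul_self_sqrt (hpos i j), habs]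
  have hf2 : ∑ p : Fin n × Fin n, f p ^ 2 = 2 * P - 2 * Q := by
    rw [Fintype.sum_prod_type]
    calc ∑ i, ∑ j, f (i, j) ^ 2
        = ∑ i, ∑ j, (A i j * v i ^ 2 + A i j * v j ^ 2 - 2 * (A i j * (v i * v j))) := by
          refine Finset.sum_congr rfl fun i _ => Finset.sum_congr rfl fun j _ => ?_
          rw [hf]
          simp only [mul_pow, sq_abs, Real.sq_sqrt (hpos i j)]
          ring
      _ = 2 * P - 2 * Q := by
          simp only [Finset.sum_sub_distrib, Finset.sum_add_distrib, ← Finset.mul_sum]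
          rw [hP2]
          ring
  have hg2 : ∑ p : Fin n × Fin n, g p ^ 2 = 2 * P + 2 * Q := by
    rw [Fintype.sum_prod_type]
    calc ∑ i, ∑ j, g (i, j) ^ 2
        = ∑ i, ∑ j, (A i j * v i ^ 2 + A i j * v j ^ 2 + 2 * (A i j * (v i * v j))) := by
          refine Finset.sum_congr rfl fun i _ => Finset.sum_congr rfl fun j _ => ?_
          rw [hg]
          simp only [mul_pow, Real.sq_sqrt (hpos i j)]
          ring
      _ = 2 * P + 2 * Q := by
          simp only [Finset.sum_add_distrib, ← Finset.mul_sum]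
          rw [hP2]
          ring
  have hcs := Real.sum_mul_le_sqrt_mul_sqrt Finset.univ f g
  rw [hfg, hf2, hg2] at hcs
  have hnn : (0 : ℝ) ≤ 2 * P - 2 * Q := by
    rw [← hf2]; exact Finset.sum_nonneg fun _ _ => sq_nonneg _
  have hmul : Real.sqrt (2 * P - 2 * Q) * Real.sqrt (2 * P + 2 * Q)
      = 2 * Real.sqrt (P ^ 2 - Q ^ 2) := by
    rw [← Real.sqrt_mul hnn,
      show (2 * P - 2 * Q) * (2 * P + 2 * Q) = 2 ^ 2 * (P ^ 2 - Q ^ 2) by ring,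
      Real.sqrt_mul (by positivity), Real.sqrt_sq (by norm_num : (0:ℝ) ≤ 2)]
  rw [hmul] at hcs
  linarith

theorem stmt_16 {n : ℕ} (A : Matrix (Fin n) (Fin n) ℝ) (hA : A.IsSymm)
    (h01 : ∀ i j, A i j = 0 ∨ A i j = 1) (hdiag : ∀ i, A i i = 0)
    (D : Matrix (Fin n) (Fin n) ℝ) (hD : D = Matrix.diagonal (fun i => ∑ j, A i j))
    (v : Fin n → ℝ) (hv : ∀ i, 0 ≤ v i ∧ v i ≤ 1) :
    (∫ s in (0 : ℝ)..1,
        ((fun i => if s < v i ^ 2 then (1 : ℝ) else 0) ⬝ᵥ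
          (D - A).mulVec (fun i => if s < v i ^ 2 then (1 : ℝ) else 0))) ≤
      Real.sqrt ((v ⬝ᵥ D.mulVec v) ^ 2 - (v ⬝ᵥ A.mulVec v) ^ 2) := by
  have hpos : ∀ i j, 0 ≤ A i j := fun i j => by
    rcases h01 i j with h | h <;> rw [h] <;> norm_num
  have key : ∀ s : ℝ,
      ((fun i => if s < v i ^ 2 then (1 : ℝ) else 0) ⬝ᵥ
        (D - A).mulVec (fun i => if s < v i ^ 2 then (1 : ℝ) else 0))
      = ∑ i, ∑ j, A i j * (if v j ^ 2 ≤ s ∧ s < v i ^ 2 then (1:ℝ) else 0) := by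
    intro s
    rw [hD, sub_mulVec]
    simp only [dotProduct, Pi.sub_apply, mulVec_diagonal]
    simp only [mulVec, dotProduct]
    refine Finset.sum_congr rfl fun i _ => ?_
    rw [mul_sub,
      show (if s < v i ^ 2 then (1:ℝ) else 0) * ((∑ j, A i j) * (if s < v i ^ 2 then (1:ℝ) else 0))
        = (∑ j, A i j) * ((if s < v i ^ 2 then (1:ℝ) else 0) * (if s < v i ^ 2 then (1:ℝ) else 0))
        from by ring,
      Finset.sum_mul, Finset.mul_sum, ← Finset.sum_sub_distrib]
    refine Finset.sum_congr rfl fun j _ => ?_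
    by_cases h1 : s < v i ^ 2
    · by_cases h2 : s < v j ^ 2
      · simp [h1, h2, not_le.2 h2]
      · simp [h1, h2, not_lt.1 h2]
    · simp [h1]
  simp only [key]
  have hItgl : ∀ i j : Fin n, IntervalIntegrable
      (fun s => A i j * (if v j ^ 2 ≤ s ∧ s < v i ^ 2 then (1:ℝ) else 0)) volume 0 1 := by
    intro i j
    simp only [aux_ind_eq]
    exact ((aux_ind_intble (v j ^ 2) (v i ^ 2)).const_mul (A i j)).intervalIntegrable
  have hsum : ∀ i : Fin n, IntervalIntegrable
      (fun s => ∑ j, A i j * (if v j ^ 2 ≤ s ∧ s < v i ^ 2 then (1:ℝ) else 0)) volume 0 1 := by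
    intro i
    have h := IntervalIntegrable.sum (μ := volume) (a := 0) (b := 1) Finset.univ
      (f := fun j s => A i j * (if v j ^ 2 ≤ s ∧ s < v i ^ 2 then (1:ℝ) else 0))
      (fun j _ => hItgl i j)
    simpa [Finset.sum_fn] using h
  have hswap1 : (∫ s in (0:ℝ)..1,
        (∑ i, ∑ j, A i j * (if v j ^ 2 ≤ s ∧ s < v i ^ 2 then (1:ℝ) else 0) : ℝ))
      = ∑ i, ∫ s in (0:ℝ)..1,
        (∑ j, A i j * (if v j ^ 2 ≤ s ∧ s < v i ^ 2 then (1:ℝ) else 0) : ℝ) :=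
    intervalIntegral.integral_finset_sum (μ := volume) (a := 0) (b := 1)
      (s := Finset.univ)
      (f := fun i s => ∑ j, A i j * (if v j ^ 2 ≤ s ∧ s < v i ^ 2 then (1:ℝ) else 0))
      (fun i _ => hsum i)
  rw [hswap1]
  have step : ∀ i : Fin n,
      (∫ s in (0:ℝ)..1, (∑ j, A i j * (if v j ^ 2 ≤ s ∧ s < v i ^ 2 then (1:ℝ) else 0) : ℝ))
      ≤ ∑ j, A i j * max (v i ^ 2 - v j ^ 2) 0 := by
    intro i
    have hswap2 : (∫ s in (0:ℝ)..1,
          (∑ j, A i j * (if v j ^ 2 ≤ s ∧ s < v i ^ 2 then (1:ℝ) else 0) : ℝ))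
        = ∑ j, ∫ s in (0:ℝ)..1,
          (A i j * (if v j ^ 2 ≤ s ∧ s < v i ^ 2 then (1:ℝ) else 0) : ℝ) :=
      intervalIntegral.integral_finset_sum (μ := volume) (a := 0) (b := 1)
        (s := Finset.univ)
        (f := fun j s => A i j * (if v j ^ 2 ≤ s ∧ s < v i ^ 2 then (1:ℝ) else 0))
        (fun j _ => hItgl i j)
    rw [hswap2]
    refine Finset.sum_le_sum fun j _ => ?_
    rw [intervalIntegral.integral_const_mul]
    exact mul_le_mul_of_nonneg_left (aux_ind_int _ _) (hpos i j)
  refine le_trans (Finset.sum_le_sum fun i _ => step i) ?_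
  have hPd : v ⬝ᵥ D.mulVec v = ∑ i, ∑ j, A i j * v i ^ 2 := by
    rw [hD]
    simp only [dotProduct, mulVec_diagonal]
    refine Finset.sum_congr rfl fun i _ => ?_
    rw [show v i * ((∑ j, A i j) * v i) = (∑ j, A i j) * v i ^ 2 from by ring, Finset.sum_mul]
  have hQd : v ⬝ᵥ A.mulVec v = ∑ i, ∑ j, A i j * (v i * v j) := by
    simp only [dotProduct, mulVec]
    refine Finset.sum_congr rfl fun i _ => ?_
    rw [Finset.mul_sum]
    exact Finset.sum_congr rfl fun j _ => by ring
  rw [hPd, hQd]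
  exact aux_cs A hA hpos v (fun i => (hv i).1)
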